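/- arXiv:2406.19683 — 3 statements merged into one kernel-verified Lean document; each statement's English description precedes it below -/
import Mathlib

section
/- Let ρ be a d×d complex positive semidefinite matrix with trace 1 and rank r, and let M be an r×d complex matrix of rank r with ρ = MᴴM. Fix n ≥ 1 and a function R from the unit vectors of ℂ^d to ℝ. For an n×d complex matrix B with rows b̃₁ᴴ,…,b̃ₙᴴ (so b̃ᵢ ∈ ℂ^d and BᴴB = Σᵢ b̃ᵢb̃ᵢᴴ), define the objective f(B) = Σ_{i : b̃ᵢ ≠ 0} ‖b̃ᵢ‖² · R(b̃ᵢ/‖b̃ᵢ‖). Then the set of objective values over all n-entry decompositions equals the set of objective values over the Stiefel manifold: { f(B) : B ∈ ℂ^{n×d}, BᴴB = ρ } = { f(X·M) : X ∈ ℂ^{n×r}, XᴴX = I_r }. In particular the infima of the two sets coincide. -/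
open Matrix
open scoped ComplexOrder

lemma aux_isUnit_det {r d : ℕ} (M : Matrix (Fin r) (Fin d) ℂ) (hM : M.rank = r) :
    IsUnit (M * Mᴴ).det := by
  have hr : (M * Mᴴ).rank = r := by rw [Matrix.rank_self_mul_conjTranspose, hM]
  have hsurj : Function.Surjective (M * Mᴴ).mulVecLin := by
    rw [← LinearMap.range_eq_top]
    apply Submodule.eq_top_of_finrank_eq
    rw [← Matrix.rank, hr]
    simp [Module.finrank_pi]
  have hinj : Function.Injective (M * Mᴴ).mulVecLin :=
    LinearMap.injective_iff_surjective.mpr hsurj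
  rw [isUnit_iff_ne_zero]
  intro hdet
  obtain ⟨v, hv, hv0⟩ := (Matrix.exists_mulVec_eq_zero_iff).mpr hdet
  exact hv (hinj (by simpa using hv0))

lemma aux_exists_X {n r d : ℕ} (M : Matrix (Fin r) (Fin d) ℂ) (hM : M.rank = r)
    (B : Matrix (Fin n) (Fin d) ℂ) (hB : Bᴴ * B = Mᴴ * M) :
    ∃ X : Matrix (Fin n) (Fin r) ℂ, Xᴴ * X = 1 ∧ X * M = B := by
  have hU := aux_isUnit_det M hM
  have hAherm : (M * Mᴴ)ᴴ = M * Mᴴ := by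
    rw [conjTranspose_mul, conjTranspose_conjTranspose]
  have hinvherm : ((M * Mᴴ)⁻¹)ᴴ = (M * Mᴴ)⁻¹ := by
    rw [Matrix.conjTranspose_nonsing_inv, hAherm]
  set P : Matrix (Fin d) (Fin d) ℂ := Mᴴ * ((M * Mᴴ)⁻¹ * M) with hP
  have hMMP : M * P = M := by
    rw [hP, ← Matrix.mul_assoc, ← Matrix.mul_assoc, Matrix.mul_nonsing_inv _ hU,
      Matrix.one_mul]
  have hPherm : Pᴴ = P := by
    rw [hP]
    simp [conjTranspose_mul, hinvherm, Matrix.mul_assoc]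
  have hBBP : (Bᴴ * B) * P = Bᴴ * B := by
    rw [hB, Matrix.mul_assoc, hMMP]
  have hPBB : P * (Bᴴ * B) = Bᴴ * B := by
    have := congrArg conjTranspose hBBP
    simpa [conjTranspose_mul, conjTranspose_conjTranspose, hPherm,
      Matrix.mul_assoc] using this
  have e1 : Bᴴ * (B * P) = Bᴴ * B := by rw [← Matrix.mul_assoc, hBBP]
  have e2 : (B * P)ᴴ * B = Bᴴ * B := by
    rw [conjTranspose_mul, hPherm, Matrix.mul_assoc, hPBB]
  have e3 : (B * P)ᴴ * (B * P) = Bᴴ * B := by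
    rw [conjTranspose_mul, hPherm, Matrix.mul_assoc, e1, hPBB]
  have key : (B * P - B)ᴴ * (B * P - B) = 0 := by
    simp only [conjTranspose_sub, Matrix.sub_mul, Matrix.mul_sub, e1, e2, e3]
    simp
  have hBP : B * P = B := by
    have := Matrix.conjTranspose_mul_self_eq_zero.mp key
    rwa [sub_eq_zero] at this
  refine ⟨B * Mᴴ * (M * Mᴴ)⁻¹, ?_, ?_⟩
  · have hBB : ∀ Z : Matrix (Fin d) (Fin r) ℂ, Bᴴ * (B * Z) = Mᴴ * (M * Z) := by
      intro Z; rw [← Matrix.mul_assoc, hB, Matrix.mul_assoc]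
    simp only [conjTranspose_mul, conjTranspose_conjTranspose, hinvherm, Matrix.mul_assoc]
    rw [hBB, ← Matrix.mul_assoc M Mᴴ, ← Matrix.mul_assoc M Mᴴ,
      Matrix.mul_nonsing_inv _ hU, Matrix.mul_one, Matrix.nonsing_inv_mul _ hU]
  · rw [Matrix.mul_assoc, Matrix.mul_assoc, ← hP, hBP]

open Classical in
/-- the set of objective values of a convex-roof objective over all `n`-entry
pure-state decompositions of `ρ` equals the set of objective values over the Stiefel
manifold `St(n, r)`, and in particular the two infima coincide. -/
theorem decompositions_eq_stiefel_objective_values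
    (n r d : ℕ) (hn : 1 ≤ n)
    (ρ : Matrix (Fin d) (Fin d) ℂ) (hρ : ρ.PosSemidef) (htr : ρ.trace = 1)
    (hrank : ρ.rank = r)
    (M : Matrix (Fin r) (Fin d) ℂ) (hM : M.rank = r) (hρM : ρ = Mᴴ * M)
    (R : (Fin d → ℂ) → ℝ)
    (f : Matrix (Fin n) (Fin d) ℂ → ℝ)
    (hf : ∀ B, f B = ∑ i ∈ Finset.univ.filter (fun i => B i ≠ 0),
        (∑ a, ‖B i a‖ ^ 2) *
          R ((Real.sqrt (∑ a, ‖B i a‖ ^ 2))⁻¹ • B i)) :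
    ({y : ℝ | ∃ B : Matrix (Fin n) (Fin d) ℂ, Bᴴ * B = ρ ∧ f B = y} =
        {y : ℝ | ∃ X : Matrix (Fin n) (Fin r) ℂ, Xᴴ * X = 1 ∧ f (X * M) = y}) ∧
      sInf {y : ℝ | ∃ B : Matrix (Fin n) (Fin d) ℂ, Bᴴ * B = ρ ∧ f B = y} =
        sInf {y : ℝ | ∃ X : Matrix (Fin n) (Fin r) ℂ, Xᴴ * X = 1 ∧ f (X * M) = y} := by
  have hset : {y : ℝ | ∃ B : Matrix (Fin n) (Fin d) ℂ, Bᴴ * B = ρ ∧ f B = y} =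
      {y : ℝ | ∃ X : Matrix (Fin n) (Fin r) ℂ, Xᴴ * X = 1 ∧ f (X * M) = y} := by
    ext y
    constructor
    · rintro ⟨B, hB, rfl⟩
      obtain ⟨X, hX1, hXM⟩ := aux_exists_X M hM B (by rw [hB, hρM])
      exact ⟨X, hX1, by rw [hXM]⟩
    · rintro ⟨X, hX, rfl⟩
      refine ⟨X * M, ?_, rfl⟩
      rw [hρM, conjTranspose_mul, Matrix.mul_assoc, ← Matrix.mul_assoc Xᴴ, hX,
        Matrix.one_mul]
  exact ⟨hset, by rw [hset]⟩
end

section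
/- (Matrix exponential as trivialization of St(n,r).) Let n ≥ r. For every n×r complex matrix X with XᴴX = I_r (a Stiefel matrix), there exists a Hermitian n×n complex matrix H (Hᴴ = H) such that X equals the first r columns of exp(i·H), i.e., X_{ij} = (exp(i·H))_{ij} for all 1 ≤ i ≤ n and 1 ≤ j ≤ r. Hence the map sending a Hermitian matrix H to the first r columns of exp(i·H) is surjective onto the Stiefel manifold St(n,r). -/
open Matrix

open Module.End Module

open scoped ComplexConjugate


section Op

variable {E : Type*} [NormedAddCommGroup E] [InnerProductSpace ℂ E]

open scoped ComplexConjugate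

variable {T : E →ₗ[ℂ] E}
  (hT : ∀ x y : E, inner (𝕜 := ℂ) (T x) (T y) = inner (𝕜 := ℂ) x y)

include hT

theorem unit_conj_mul_eigenvalue {μ : ℂ} (hμ : HasEigenvalue T μ) : conj μ * μ = 1 := by
  obtain ⟨v, hv₁, hv₂⟩ := hμ.exists_hasEigenvector
  rw [mem_eigenspace_iff] at hv₁
  have h1 := hT v v
  rw [hv₁, inner_smul_left, inner_smul_right] at h1
  have h2 : (conj μ * μ - 1) * inner (𝕜 := ℂ) v v = 0 := by linear_combination h1
  rcases mul_eq_zero.mp h2 with h | h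
  · linear_combination h
  · exact absurd h (inner_self_ne_zero.mpr hv₂)

theorem unit_orthogonalFamily_eigenspaces :
    OrthogonalFamily ℂ (fun μ => eigenspace T μ) fun μ => (eigenspace T μ).subtypeₗᵢ := by
  rintro μ ν hμν ⟨v, hv⟩ ⟨w, hw⟩
  by_cases hv' : v = 0
  · simp [hv']
  have H : conj μ * μ = 1 :=
    unit_conj_mul_eigenvalue hT (hasEigenvalue_of_hasEigenvector ⟨hv, hv'⟩)
  rw [mem_eigenspace_iff] at hv hw
  show inner (𝕜 := ℂ) v w = 0
  have h1 := hT v w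
  rw [hv, hw, inner_smul_left, inner_smul_right] at h1
  have h2 : (conj μ * ν - 1) * inner (𝕜 := ℂ) v w = 0 := by linear_combination h1
  rcases mul_eq_zero.mp h2 with h | h
  · exfalso
    apply hμν
    have hμ0 : conj μ ≠ 0 := by
      intro h0; rw [h0, zero_mul] at H; exact zero_ne_one H
    have hh : conj μ * μ = conj μ * ν := by linear_combination H - h
    exact (mul_left_cancel₀ hμ0 hh)
  · exact h

theorem unit_invariant_orthogonalComplement_eigenspace (μ : ℂ)
    (v : E) (hv : v ∈ (eigenspace T μ)ᗮ) : T v ∈ (eigenspace T μ)ᗮ := by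
  rw [Submodule.mem_orthogonal] at hv ⊢
  intro w hw
  by_cases hw' : w = 0
  · simp [hw']
  have H : conj μ * μ = 1 :=
    unit_conj_mul_eigenvalue hT (hasEigenvalue_of_hasEigenvector ⟨hw, hw'⟩)
  have hμ0 : μ ≠ 0 := by
    intro h0; rw [h0, mul_zero] at H; exact zero_ne_one H
  have hTw : T (μ⁻¹ • w) = w := by
    rw [_root_.map_smul, mem_eigenspace_iff.mp hw, smul_smul, inv_mul_cancel₀ hμ0, one_smul]
  calc inner (𝕜 := ℂ) w (T v) = inner (𝕜 := ℂ) (T (μ⁻¹ • w)) (T v) := by rw [hTw]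
    _ = inner (𝕜 := ℂ) (μ⁻¹ • w) v := hT _ _
    _ = conj μ⁻¹ * inner (𝕜 := ℂ) w v := inner_smul_left _ _ _
    _ = 0 := by rw [hv w hw, mul_zero]

theorem unit_orthogonalComplement_iSup_eigenspaces_invariant
    ⦃v : E⦄ (hv : v ∈ (⨆ μ, eigenspace T μ)ᗮ) : T v ∈ (⨆ μ, eigenspace T μ)ᗮ := by
  rw [← Submodule.iInf_orthogonal] at hv ⊢
  exact T.iInf_invariant (fun μ => unit_invariant_orthogonalComplement_eigenspace hT μ) v hv

theorem unit_orthogonalComplement_iSup_eigenspaces_eq_bot [FiniteDimensional ℂ E] :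
    (⨆ μ, eigenspace T μ)ᗮ = ⊥ := by
  by_contra hW
  haveI : Nontrivial ((⨆ μ, eigenspace T μ)ᗮ : Submodule ℂ E) :=
    Submodule.nontrivial_iff_ne_bot.mpr hW
  obtain ⟨μ, hμ⟩ := Module.End.exists_eigenvalue
    (T.restrict (unit_orthogonalComplement_iSup_eigenspaces_invariant hT))
  obtain ⟨v, hv₁, hv₂⟩ := hμ.exists_hasEigenvector
  have hvW : (v : E) ∈ (⨆ μ, eigenspace T μ)ᗮ := v.2
  have hvE : (v : E) ∈ eigenspace T μ := by
    have h := eigenspace_restrict_le_eigenspace T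
      (unit_orthogonalComplement_iSup_eigenspaces_invariant hT) μ
    exact h ⟨v, hv₁, rfl⟩
  have hvs : (v : E) ∈ (⨆ μ, eigenspace T μ) := le_iSup (fun μ => eigenspace T μ) μ hvE
  have h0 : inner (𝕜 := ℂ) (v : E) (v : E) = 0 :=
    (Submodule.mem_orthogonal _ _).mp hvW _ hvs
  exact hv₂ (Subtype.coe_injective (inner_self_eq_zero.mp h0))

theorem unit_exists_eigenbasis [FiniteDimensional ℂ E] {n : ℕ} (hn : finrank ℂ E = n) :
    ∃ (b : OrthonormalBasis (Fin n) ℂ E) (μ : Fin n → ℂ),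
      (∀ i, conj (μ i) * μ i = 1) ∧ ∀ i, T (b i) = μ i • b i := by
  have hfam : OrthogonalFamily ℂ (fun μ : Eigenvalues T => eigenspace T μ.val) fun μ =>
      (eigenspace T μ.val).subtypeₗᵢ :=
    (unit_orthogonalFamily_eigenspaces hT).comp Subtype.coe_injective
  have hsup : (⨆ μ : Eigenvalues T, eigenspace T μ.val)ᗮ = ⊥ := by
    show (⨆ μ : { μ // eigenspace T μ ≠ ⊥ }, eigenspace T μ)ᗮ = ⊥
    rw [iSup_ne_bot_subtype, unit_orthogonalComplement_iSup_eigenspaces_eq_bot hT]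
  have hint : DirectSum.IsInternal fun μ : Eigenvalues T => eigenspace T μ.val :=
    hfam.isInternal_iff.mpr hsup
  refine ⟨hint.subordinateOrthonormalBasis hn hfam,
    fun i => (hint.subordinateOrthonormalBasisIndex hn i hfam).val, fun i => ?_, fun i => ?_⟩
  · apply unit_conj_mul_eigenvalue hT
    apply hasEigenvalue_of_hasEigenvector (x := hint.subordinateOrthonormalBasis hn hfam i)
    constructor
    · exact hint.subordinateOrthonormalBasis_subordinate hn i hfam
    · simpa using (hint.subordinateOrthonormalBasis hn hfam).toBasis.ne_zero i
  · exact mem_eigenspace_iff.mp (hint.subordinateOrthonormalBasis_subordinate hn i hfam)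

end Op


theorem unitary_eq_exp_I_smul {n : ℕ} (U : Matrix (Fin n) (Fin n) ℂ) (hU : Uᴴ * U = 1) :
    ∃ H : Matrix (Fin n) (Fin n) ℂ, H.IsHermitian ∧
      NormedSpace.exp (Complex.I • H) = U := by
  classical
  set E := EuclideanSpace ℂ (Fin n)
  let T : E →ₗ[ℂ] E :=
    { toFun := fun x => WithLp.toLp 2 (U.mulVec x)
      map_add' := fun x y => by
        show WithLp.toLp 2 (U *ᵥ (x.ofLp + y.ofLp)) = _; rw [Matrix.mulVec_add]; rfl
      map_smul' := fun c x => by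
        show WithLp.toLp 2 (U *ᵥ (c • x.ofLp)) = _; rw [Matrix.mulVec_smul]; rfl }
  have hdot : ∀ a c : Fin n → ℂ, (∑ i, conj (a i) * c i) = star a ⬝ᵥ c := by
    intro a c
    simp [dotProduct, Complex.star_def]
  have hT : ∀ x y : E, inner (𝕜 := ℂ) (T x) (T y) = inner (𝕜 := ℂ) x y := by
    intro x y
    rw [EuclideanSpace.inner_eq_star_dotProduct, EuclideanSpace.inner_eq_star_dotProduct,
      dotProduct_comm, dotProduct_comm y.ofLp]
    show star (U *ᵥ x.ofLp) ⬝ᵥ (U *ᵥ y.ofLp) = star x.ofLp ⬝ᵥ y.ofLp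
    rw [star_mulVec, dotProduct_mulVec, vecMul_vecMul, hU, vecMul_one]
  have hn : finrank ℂ E = n := finrank_euclideanSpace_fin
  obtain ⟨b, μ, hμ1, heig⟩ := unit_exists_eigenbasis hT hn
  -- eigenvalues lie on the unit circle
  have habs : ∀ k, ‖μ k‖ = 1 := by
    intro k
    have h1 : μ k * conj (μ k) = 1 := by rw [mul_comm]; exact hμ1 k
    rw [Complex.mul_conj] at h1
    have h2 : Complex.normSq (μ k) = 1 := by exact_mod_cast h1
    have h3 := Complex.normSq_eq_norm_sq (μ k)
    rw [h2] at h3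
    nlinarith [norm_nonneg (μ k)]
  have hexp : ∀ k, Complex.exp ((μ k).arg * Complex.I) = μ k := by
    intro k
    have := Complex.norm_mul_exp_arg_mul_I (μ k)
    rwa [habs k, Complex.ofReal_one, one_mul] at this
  let P : Matrix (Fin n) (Fin n) ℂ := Matrix.of fun i k => b k i
  have hPP : Pᴴ * P = 1 := by
    ext j k
    have hb := b.orthonormal
    rw [orthonormal_iff_ite] at hb
    have := hb j k
    rw [PiLp.inner_apply] at this
    simp only [RCLike.inner_apply] at this
    simp only [Matrix.mul_apply, Matrix.conjTranspose_apply, Matrix.one_apply, P,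
      Matrix.of_apply, Complex.star_def]
    rw [← this]; exact Finset.sum_congr rfl fun _ _ => mul_comm _ _
  have hPP' : P * Pᴴ = 1 := mul_eq_one_comm.mp hPP
  have hUnitP : IsUnit P := ⟨⟨P, Pᴴ, hPP', hPP⟩, rfl⟩
  have hPinv : P⁻¹ = Pᴴ := Matrix.inv_eq_right_inv hPP'
  have hUP : U * P = P * Matrix.diagonal μ := by
    ext i k
    rw [Matrix.mul_apply, Matrix.mul_diagonal]
    have h1 : (T (b k) : E) i = μ k * (b k) i := by
      rw [heig k]; rfl
    have h2 : (T (b k) : E) i = ∑ j, U i j * (b k) j := rfl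
    calc ∑ j, U i j * P j k = ∑ j, U i j * (b k) j := rfl
      _ = μ k * (b k) i := by rw [← h2, h1]
      _ = P i k * μ k := by rw [mul_comm]; rfl
  have hUeq : U = P * Matrix.diagonal μ * Pᴴ := by
    rw [← hUP, Matrix.mul_assoc, hPP', Matrix.mul_one]
  refine ⟨P * Matrix.diagonal (fun k => ((μ k).arg : ℂ)) * Pᴴ, ?_, ?_⟩
  · show _ = _
    rw [Matrix.conjTranspose_mul, Matrix.conjTranspose_mul, Matrix.conjTranspose_conjTranspose,
      Matrix.diagonal_conjTranspose]
    have : star (fun k => ((μ k).arg : ℂ)) = fun k => ((μ k).arg : ℂ) := by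
      funext k; simp [Complex.conj_ofReal]
    rw [this, Matrix.mul_assoc]
  · have hsmul : Complex.I • (P * Matrix.diagonal (fun k => ((μ k).arg : ℂ)) * Pᴴ)
        = P * Matrix.diagonal (fun k => ((μ k).arg : ℂ) * Complex.I) * Pᴴ := by
      have hd : Complex.I • Matrix.diagonal (fun k => ((μ k).arg : ℂ))
          = Matrix.diagonal (fun k => ((μ k).arg : ℂ) * Complex.I) := by
        ext i j
        by_cases hij : i = j <;> simp [Matrix.diagonal_apply, hij, mul_comm]
      rw [← Matrix.smul_mul, ← Matrix.mul_smul, hd]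
    rw [hsmul, ← hPinv]
    rw [Matrix.exp_conj P (Matrix.diagonal fun k => ((μ k).arg : ℂ) * Complex.I) hUnitP]
    rw [Matrix.exp_diagonal]
    have : (NormedSpace.exp fun k => ((μ k).arg : ℂ) * Complex.I) = μ := by
      funext k
      rw [Pi.exp_def, ← Complex.exp_eq_exp_ℂ]; simpa using hexp k
    rw [this, hPinv, ← hUeq]

/-- matrix exponential as trivialization of `St(n,r)`: every Stiefel matrix
`X ∈ St(n,r)` equals the first `r` columns of `exp(i·H)` for some Hermitian `H`; hence the
map `H ↦ first r columns of exp(i·H)` is surjective onto the Stiefel manifold. -/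
theorem stiefel_eq_columns_of_exp_I_smul_hermitian
    (n r : ℕ) (h : r ≤ n)
    (X : Matrix (Fin n) (Fin r) ℂ) (hX : Xᴴ * X = 1) :
    ∃ H : Matrix (Fin n) (Fin n) ℂ, H.IsHermitian ∧
      ∀ (i : Fin n) (j : Fin r),
        X i j = (NormedSpace.exp (Complex.I • H)) i (Fin.castLE h j) := by
  classical
  set E := EuclideanSpace ℂ (Fin n)
  let v : Fin n → E := fun k =>
    if hk : (k : ℕ) < r then WithLp.toLp 2 (fun i => X i ⟨k, hk⟩) else 0
  set s : Set (Fin n) := {k | (k : ℕ) < r} with hs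
  have hcard : finrank ℂ E = Fintype.card (Fin n) := by
    simp [E, finrank_euclideanSpace_fin]
  have hortho : Orthonormal ℂ (s.restrict v) := by
    rw [orthonormal_iff_ite]
    rintro ⟨j, hj⟩ ⟨k, hk⟩
    have hj' : (j : ℕ) < r := hj
    have hk' : (k : ℕ) < r := hk
    have : inner (𝕜 := ℂ) (s.restrict v ⟨j, hj⟩) (s.restrict v ⟨k, hk⟩)
        = ∑ i, conj (X i ⟨j, hj'⟩) * X i ⟨k, hk'⟩ := by
      rw [PiLp.inner_apply]
      simp only [Set.restrict_apply, v, dif_pos hj', dif_pos hk', RCLike.inner_apply]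
      refine Finset.sum_congr rfl fun i _ => ?_
      show (v k).ofLp i * conj ((v j).ofLp i) = conj (X i ⟨j, hj'⟩) * X i ⟨k, hk'⟩
      simp only [v, dif_pos hj', dif_pos hk', WithLp.ofLp_toLp]
      exact mul_comm _ _
    rw [this]
    have hXe := congrFun (congrFun hX ⟨j, hj'⟩) ⟨k, hk'⟩
    rw [Matrix.mul_apply, Matrix.one_apply] at hXe
    simp only [Matrix.conjTranspose_apply, Complex.star_def] at hXe
    rw [hXe]
    by_cases hjk : j = k
    · subst hjk; simp
    · have h1 : (⟨j, hj'⟩ : Fin r) ≠ ⟨k, hk'⟩ := by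
        intro hc; exact hjk (by
          have := congrArg Fin.val hc
          exact Fin.ext this)
      have h2 : (⟨j, hj⟩ : s) ≠ ⟨k, hk⟩ := by
        intro hc; exact hjk (by simpa using congrArg Subtype.val hc)
      rw [if_neg h1, if_neg h2]
  obtain ⟨b, hb⟩ := hortho.exists_orthonormalBasis_extension_of_card_eq hcard
  let U : Matrix (Fin n) (Fin n) ℂ := Matrix.of fun i k => b k i
  have hU : Uᴴ * U = 1 := by
    ext j k
    have hob := b.orthonormal
    rw [orthonormal_iff_ite] at hob
    have := hob j k
    rw [PiLp.inner_apply] at this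
    simp only [RCLike.inner_apply] at this
    simp only [Matrix.mul_apply, Matrix.conjTranspose_apply, Matrix.one_apply, U,
      Matrix.of_apply, Complex.star_def]
    rw [← this]; exact Finset.sum_congr rfl fun _ _ => mul_comm _ _
  obtain ⟨H, hH, hHU⟩ := unitary_eq_exp_I_smul U hU
  refine ⟨H, hH, fun i j => ?_⟩
  rw [hHU]
  have hmem : (Fin.castLE h j : Fin n) ∈ s := by
    simp [hs, Fin.castLE]
  have := hb _ hmem
  have hXv : v (Fin.castLE h j) i = X i j := by
    simp only [v, dif_pos (show ((Fin.castLE h j : Fin n) : ℕ) < r from j.isLt)]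
    congr 1
  show X i j = U i (Fin.castLE h j)
  rw [show U i (Fin.castLE h j) = b (Fin.castLE h j) i from rfl, this, hXv]
end

section
/- (Euler–Hurwitz angles as trivialization of St(n,r).) Let n ≥ 2, 1 ≤ r ≤ n, and let X be an n×r complex matrix with XᴴX = I_r (a Stiefel matrix). Then there exist a finite list of Givens rotation matrices G^{(s₁)}(θ₁,φ₁), …, G^{(s_m)}(θ_m,φ_m) and real phases ϕ₁,…,ϕ_r such that, with U = G^{(s_m)}(θ_m,φ_m) ⋯ G^{(s₁)}(θ₁,φ₁), the matrix U·X is 'diagonal with unimodular entries': (U·X)_{ij} = δ_{ij}·e^{iϕ_i} for all 1 ≤ i ≤ n and 1 ≤ j ≤ r. Equivalently, X = Uᴴ·D(ϕ) where D(ϕ) is the n×r matrix with entries D_{ij} = δ_{ij}e^{iϕ_i}, so every Stiefel matrix is in the image of the Euler–Hurwitz parametrization. -/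
open Matrix

/-- The Givens rotation matrix `G^{(s)}(θ,φ) ∈ ℂ^{n×n}` (indices `0`-based, so `s` here
corresponds to the `1`-based index `s+1`): it acts on coordinates `s` and `s+1` by
`G_{ss} = e^{iφ}cos θ`, `G_{s,s+1} = e^{−iφ}sin θ`, `G_{s+1,s} = −e^{iφ}sin θ`,
`G_{s+1,s+1} = e^{−iφ}cos θ`, and is the identity elsewhere. -/
noncomputable def givens (n : ℕ) (s : ℕ) (θ φ : ℝ) : Matrix (Fin n) (Fin n) ℂ :=
  Matrix.of fun i j =>
    if (i : ℕ) = s ∧ (j : ℕ) = s then Complex.exp (φ * Complex.I) * (Real.cos θ : ℂ)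
    else if (i : ℕ) = s ∧ (j : ℕ) = s + 1 then
      Complex.exp (-(φ * Complex.I)) * (Real.sin θ : ℂ)
    else if (i : ℕ) = s + 1 ∧ (j : ℕ) = s then
      -(Complex.exp (φ * Complex.I) * (Real.sin θ : ℂ))
    else if (i : ℕ) = s + 1 ∧ (j : ℕ) = s + 1 then
      Complex.exp (-(φ * Complex.I)) * (Real.cos θ : ℂ)
    else if i = j then 1 else 0

lemma givens_row_ne {n s : ℕ} {θ φ : ℝ} {i j : Fin n}
    (h1 : (i : ℕ) ≠ s) (h2 : (i : ℕ) ≠ s + 1) :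
    givens n s θ φ i j = if i = j then 1 else 0 := by
  simp [givens, h1, h2]
lemma givens_col_ne {n s : ℕ} {θ φ : ℝ} {i j : Fin n}
    (h1 : (j : ℕ) ≠ s) (h2 : (j : ℕ) ≠ s + 1) :
    givens n s θ φ i j = if i = j then 1 else 0 := by
  simp [givens, h1, h2]

lemma star_exp_phi (φ : ℝ) :
    star (Complex.exp ((φ:ℂ) * Complex.I)) = Complex.exp (-((φ:ℂ) * Complex.I)) := by
  rw [Complex.star_def, ← Complex.exp_conj]
  congr 1
  simp [Complex.conj_I]

lemma star_exp_phi' (φ : ℝ) :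
    star (Complex.exp (-((φ:ℂ) * Complex.I))) = Complex.exp ((φ:ℂ) * Complex.I) := by
  rw [Complex.star_def, ← Complex.exp_conj]
  congr 1
  simp [Complex.conj_I]

lemma exp_mul_exp_neg (φ : ℝ) :
    Complex.exp (-((φ:ℂ) * Complex.I)) * Complex.exp ((φ:ℂ) * Complex.I) = 1 := by
  rw [← Complex.exp_add]; simp

lemma cos_sq_add_sin_sq_c (θ : ℝ) :
    (Real.cos θ : ℂ) * (Real.cos θ : ℂ) + (Real.sin θ : ℂ) * (Real.sin θ : ℂ) = 1 := by
  have h := Complex.cos_sq_add_sin_sq (θ : ℂ)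
  rw [Complex.ofReal_cos, Complex.ofReal_sin]
  linear_combination h

lemma star_real (c : ℝ) : star ((c : ℝ) : ℂ) = ((c : ℝ) : ℂ) := by
  rw [Complex.star_def, Complex.conj_ofReal]

lemma givens_unitary {n s : ℕ} (hs : s + 1 < n) (θ φ : ℝ) :
    (givens n s θ φ)ᴴ * givens n s θ φ = 1 := by
  have hsn : s < n := by omega
  set A : Fin n := ⟨s, hsn⟩ with hA
  set B : Fin n := ⟨s + 1, hs⟩ with hB
  have hAB : A ≠ B := by simp [hA, hB, Fin.ext_iff]
  have eAA : givens n s θ φ A A = Complex.exp (φ * Complex.I) * (Real.cos θ : ℂ) := by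
    simp [givens, hA]
  have eAB : givens n s θ φ A B = Complex.exp (-(φ * Complex.I)) * (Real.sin θ : ℂ) := by
    simp [givens, hA, hB]
  have eBA : givens n s θ φ B A = -(Complex.exp (φ * Complex.I) * (Real.sin θ : ℂ)) := by
    simp [givens, hA, hB]
  have eBB : givens n s θ φ B B = Complex.exp (-(φ * Complex.I)) * (Real.cos θ : ℂ) := by
    simp [givens, hA, hB]
  have sAA : star (givens n s θ φ A A) = Complex.exp (-(φ * Complex.I)) * (Real.cos θ : ℂ) := by
    rw [eAA, star_mul', star_exp_phi, star_real]
  have sAB : star (givens n s θ φ A B) = Complex.exp (φ * Complex.I) * (Real.sin θ : ℂ) := by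
    rw [eAB, star_mul', star_exp_phi', star_real]
  have sBA : star (givens n s θ φ B A)
      = -(Complex.exp (-(φ * Complex.I)) * (Real.sin θ : ℂ)) := by
    rw [eBA, star_neg, star_mul', star_exp_phi, star_real]
  have sBB : star (givens n s θ φ B B) = Complex.exp (φ * Complex.I) * (Real.cos θ : ℂ) := by
    rw [eBB, star_mul', star_exp_phi', star_real]
  ext j k
  rw [Matrix.mul_apply]
  simp only [Matrix.conjTranspose_apply]
  by_cases hj : j = A ∨ j = B
  · by_cases hk : k = A ∨ k = B
    · have hjk_ne : ∀ i : Fin n, i ≠ A → i ≠ B →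
          star (givens n s θ φ i j) * givens n s θ φ i k = 0 := by
        intro i hiA hiB
        have h1 : (i : ℕ) ≠ s := fun h => hiA (Fin.ext h)
        have h2 : (i : ℕ) ≠ s + 1 := fun h => hiB (Fin.ext h)
        rw [givens_row_ne h1 h2, if_neg, star_zero, zero_mul]
        rintro rfl
        rcases hj with rfl | rfl
        · exact hiA rfl
        · exact hiB rfl
      rw [show (Finset.univ : Finset (Fin n)) = insert A
        (insert B ((Finset.univ : Finset (Fin n)) \ {A, B})) from ?_]
      · rw [Finset.sum_insert, Finset.sum_insert]
        · rw [Finset.sum_eq_zero (fun i hi => by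
            simp only [Finset.mem_sdiff, Finset.mem_insert, Finset.mem_singleton, not_or] at hi
            exact hjk_ne i hi.2.1 hi.2.2), add_zero]
          rcases hj with rfl | rfl <;> rcases hk with rfl | rfl
          · rw [sAA, eAA, sBA, eBA, Matrix.one_apply_eq]
            linear_combination ((Real.cos θ : ℂ) * (Real.cos θ : ℂ)
              + (Real.sin θ : ℂ) * (Real.sin θ : ℂ)) * exp_mul_exp_neg φ
              + cos_sq_add_sin_sq_c θ
          · rw [sAA, eAB, sBA, eBB, Matrix.one_apply_ne hAB]
            ring
          · rw [sAB, eAA, sBB, eBA, Matrix.one_apply_ne hAB.symm]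
            ring
          · rw [sAB, eAB, sBB, eBB, Matrix.one_apply_eq]
            linear_combination ((Real.cos θ : ℂ) * (Real.cos θ : ℂ)
              + (Real.sin θ : ℂ) * (Real.sin θ : ℂ)) * exp_mul_exp_neg φ
              + cos_sq_add_sin_sq_c θ
        · simp [hB]
        · simp [hAB]
      · ext i
        simp only [Finset.mem_insert, Finset.mem_sdiff, Finset.mem_univ, Finset.mem_singleton,
          true_and, not_or]
        constructor
        · intro _; tauto
        · intro _; trivial
    · push_neg at hk
      have hjk : j ≠ k := by
        rintro rfl
        rcases hj with rfl | rfl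
        · exact hk.1 rfl
        · exact hk.2 rfl
      rw [Matrix.one_apply_ne hjk]
      refine Finset.sum_eq_zero fun i _ => ?_
      have hk1 : (k : ℕ) ≠ s := fun h => hk.1 (Fin.ext h)
      have hk2 : (k : ℕ) ≠ s + 1 := fun h => hk.2 (Fin.ext h)
      rw [givens_col_ne hk1 hk2]
      by_cases hik : i = k
      · subst hik
        have h1 : (i : ℕ) ≠ s := hk1
        have h2 : (i : ℕ) ≠ s + 1 := hk2
        rw [givens_row_ne h1 h2, if_neg (by rintro rfl; exact hjk rfl), star_zero, zero_mul]
      · rw [if_neg hik, mul_zero]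
  · push_neg at hj
    have hj1 : (j : ℕ) ≠ s := fun h => hj.1 (Fin.ext h)
    have hj2 : (j : ℕ) ≠ s + 1 := fun h => hj.2 (Fin.ext h)
    rw [Finset.sum_eq_single j]
    · rw [givens_col_ne hj1 hj2, if_pos rfl, star_one, one_mul, givens_row_ne hj1 hj2,
        Matrix.one_apply]
    · intro i _ hij
      rw [givens_col_ne hj1 hj2, if_neg hij, star_zero, zero_mul]
    · simp

section entries
variable {n s : ℕ} (hs : s + 1 < n) (θ φ : ℝ)
lemma givens_aa : givens n s θ φ ⟨s, by omega⟩ ⟨s, by omega⟩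
    = Complex.exp (φ * Complex.I) * (Real.cos θ : ℂ) := by simp [givens]
lemma givens_ab : givens n s θ φ ⟨s, by omega⟩ ⟨s + 1, hs⟩
    = Complex.exp (-(φ * Complex.I)) * (Real.sin θ : ℂ) := by simp [givens]
lemma givens_ba : givens n s θ φ ⟨s + 1, hs⟩ ⟨s, by omega⟩
    = -(Complex.exp (φ * Complex.I) * (Real.sin θ : ℂ)) := by simp [givens]
lemma givens_bb : givens n s θ φ ⟨s + 1, hs⟩ ⟨s + 1, hs⟩
    = Complex.exp (-(φ * Complex.I)) * (Real.cos θ : ℂ) := by simp [givens]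
end entries

-- multiplication action
lemma givens_mul_apply {n r' s : ℕ} (hs : s + 1 < n) (θ φ : ℝ)
    (Y : Matrix (Fin n) (Fin r') ℂ) (i : Fin n) (j : Fin r') :
    (givens n s θ φ * Y) i j =
      if (i : ℕ) = s then
        Complex.exp (φ * Complex.I) * (Real.cos θ : ℂ) * Y ⟨s, by omega⟩ j
          + Complex.exp (-(φ * Complex.I)) * (Real.sin θ : ℂ) * Y ⟨s + 1, hs⟩ j
      else if (i : ℕ) = s + 1 then
        -(Complex.exp (φ * Complex.I) * (Real.sin θ : ℂ)) * Y ⟨s, by omega⟩ j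
          + Complex.exp (-(φ * Complex.I)) * (Real.cos θ : ℂ) * Y ⟨s + 1, hs⟩ j
      else Y i j := by
  have hsn : s < n := by omega
  have hab : (⟨s, hsn⟩ : Fin n) ≠ ⟨s + 1, hs⟩ := by simp [Fin.ext_iff]
  rw [Matrix.mul_apply]
  by_cases h1 : (i : ℕ) = s
  · have hi : i = ⟨s, hsn⟩ := by exact Fin.ext h1
    subst hi
    rw [if_pos h1]
    rw [show (Finset.univ : Finset (Fin n)) = insert (⟨s, hsn⟩ : Fin n)
      (insert (⟨s+1, hs⟩ : Fin n) ((Finset.univ : Finset (Fin n)) \ {⟨s, hsn⟩, ⟨s+1, hs⟩})) from ?_]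
    · rw [Finset.sum_insert, Finset.sum_insert]
      · have hz : ∀ k ∈ (Finset.univ : Finset (Fin n)) \ {⟨s, hsn⟩, ⟨s+1, hs⟩},
            givens n s θ φ ⟨s, hsn⟩ k * Y k j = 0 := by
          intro k hk
          simp only [Finset.mem_sdiff, Finset.mem_insert, Finset.mem_singleton, not_or] at hk
          have h1 : (k : ℕ) ≠ s := fun h => hk.2.1 (Fin.ext h)
          have h2 : (k : ℕ) ≠ s + 1 := fun h => hk.2.2 (Fin.ext h)
          rw [givens_col_ne h1 h2, if_neg, zero_mul]
          exact fun h => h1 (by simp [← h])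
        rw [Finset.sum_eq_zero hz, add_zero, givens_aa hs θ φ, givens_ab hs θ φ]
      · simp
      · simp [hab]
    · ext k
      simp only [Finset.mem_insert, Finset.mem_sdiff, Finset.mem_univ, Finset.mem_singleton,
        true_and, not_or]
      constructor
      · intro _; tauto
      · intro _; trivial
  · by_cases h2 : (i : ℕ) = s + 1
    · have hi : i = ⟨s + 1, hs⟩ := Fin.ext h2
      subst hi
      rw [if_neg h1, if_pos h2]
      rw [show (Finset.univ : Finset (Fin n)) = insert (⟨s, hsn⟩ : Fin n)
        (insert (⟨s+1, hs⟩ : Fin n) ((Finset.univ : Finset (Fin n)) \ {⟨s, hsn⟩, ⟨s+1, hs⟩})) from ?_]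
      · rw [Finset.sum_insert, Finset.sum_insert]
        · have hz : ∀ k ∈ (Finset.univ : Finset (Fin n)) \ {⟨s, hsn⟩, ⟨s+1, hs⟩},
              givens n s θ φ ⟨s+1, hs⟩ k * Y k j = 0 := by
            intro k hk
            simp only [Finset.mem_sdiff, Finset.mem_insert, Finset.mem_singleton, not_or] at hk
            have h1 : (k : ℕ) ≠ s := fun h => hk.2.1 (Fin.ext h)
            have h2 : (k : ℕ) ≠ s + 1 := fun h => hk.2.2 (Fin.ext h)
            rw [givens_col_ne h1 h2, if_neg, zero_mul]
            exact fun h => h2 (by simp [← h])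
          rw [Finset.sum_eq_zero hz, add_zero, givens_ba hs θ φ, givens_bb hs θ φ]
        · simp
        · simp [hab]
      · ext k
        simp only [Finset.mem_insert, Finset.mem_sdiff, Finset.mem_univ, Finset.mem_singleton,
          true_and, not_or]
        constructor
        · intro _; tauto
        · intro _; trivial
    · rw [if_neg h1, if_neg h2]
      rw [Finset.sum_eq_single i]
      · rw [givens_row_ne h1 h2, if_pos rfl, one_mul]
      · intro k _ hk
        rw [givens_row_ne h1 h2, if_neg (Ne.symm hk), zero_mul]
      · simp

lemma exists_rot (a b : ℂ) :
    ∃ θ φ : ℝ,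
      -(Complex.exp (φ * Complex.I) * (Real.sin θ : ℂ)) * a
        + Complex.exp (-(φ * Complex.I)) * (Real.cos θ : ℂ) * b = 0 := by
  by_cases ha : a = 0
  · refine ⟨Real.pi / 2, 0, ?_⟩
    simp [ha, Real.cos_pi_div_two]
  · obtain ⟨z, hb⟩ : ∃ z : ℂ, b = z * a := ⟨b / a, by field_simp⟩
    refine ⟨Real.arctan (‖z‖), z.arg / 2, ?_⟩
    have hsin : (Real.sin (Real.arctan (‖z‖)) : ℂ)
        = (‖z‖ : ℂ) * (Real.cos (Real.arctan (‖z‖)) : ℂ) := by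
      have h1 : Real.sin (Real.arctan (‖z‖))
          = ‖z‖ * Real.cos (Real.arctan (‖z‖)) := by
        rw [Real.sin_arctan, Real.cos_arctan]; ring
      exact_mod_cast congrArg (fun x : ℝ => (x : ℂ)) h1
    have hzz : z = (‖z‖ : ℂ)
        * (Complex.exp ((z.arg / 2 : ℝ) * Complex.I) * Complex.exp ((z.arg / 2 : ℝ) * Complex.I)) := by
      rw [← Complex.exp_add]
      rw [show ((z.arg / 2 : ℝ) : ℂ) * Complex.I + ((z.arg / 2 : ℝ) : ℂ) * Complex.I
        = (z.arg : ℂ) * Complex.I by push_cast; ring]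
      exact (Complex.norm_mul_exp_arg_mul_I z).symm
    have h0 : Complex.exp (-(((z.arg / 2 : ℝ) : ℂ) * Complex.I))
        * Complex.exp (((z.arg / 2 : ℝ) : ℂ) * Complex.I) = 1 := by
      rw [← Complex.exp_add]; simp
    rw [hb, hsin]
    linear_combination ((‖z‖ : ℂ) * (Real.cos (Real.arctan (‖z‖)) : ℂ) * a
      * Complex.exp (((z.arg / 2 : ℝ) : ℂ) * Complex.I)) * h0
      + (Complex.exp (-(((z.arg / 2 : ℝ) : ℂ) * Complex.I))
          * (Real.cos (Real.arctan (‖z‖)) : ℂ) * a) * hzz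

lemma prod_unitary {n : ℕ} (L : List (Matrix (Fin n) (Fin n) ℂ))
    (h : ∀ G ∈ L, Gᴴ * G = 1) : L.prodᴴ * L.prod = 1 := by
  induction L with
  | nil => simp
  | cons G L ih =>
    simp only [List.prod_cons, Matrix.conjTranspose_mul]
    rw [Matrix.mul_assoc, ← Matrix.mul_assoc Gᴴ, h G List.mem_cons_self, Matrix.one_mul,
      ih fun G' hG' => h G' (List.mem_cons_of_mem _ hG')]

lemma prod_fix {n k : ℕ} (L : List (Matrix (Fin n) (Fin n) ℂ))
    (hL : ∀ G ∈ L, ∃ s θ φ, k ≤ s ∧ s + 1 < n ∧ G = givens n s θ φ) :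
    (∀ i i' : Fin n, (i : ℕ) < k → L.prod i i' = if i = i' then 1 else 0) ∧
    (∀ i i' : Fin n, (i' : ℕ) < k → L.prod i i' = if i = i' then 1 else 0) := by
  induction L with
  | nil => constructor <;> intro i i' _ <;> simp [Matrix.one_apply]
  | cons G L ih =>
    obtain ⟨s, θ, φ, hks, hsn, rfl⟩ := hL _ List.mem_cons_self
    have ihL := ih fun G' hG' => hL G' (List.mem_cons_of_mem _ hG')
    simp only [List.prod_cons]
    constructor
    · intro i i' hi
      rw [Matrix.mul_apply, Finset.sum_eq_single i]
      · rw [givens_row_ne (by omega) (by omega), if_pos rfl, one_mul, ihL.1 i i' hi]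
      · intro t _ ht
        rw [givens_row_ne (by omega) (by omega), if_neg (Ne.symm ht), zero_mul]
      · simp
    · intro i i' hi'
      rw [Matrix.mul_apply, Finset.sum_eq_single i']
      · rw [ihL.2 i' i' hi', if_pos rfl, mul_one]
        exact givens_col_ne (by omega) (by omega)
      · intro t _ ht
        rw [ihL.2 t i' hi', if_neg ht, mul_zero]
      · simp

lemma zero_below {n r' : ℕ} :
    ∀ d k, k + d + 1 = n → ∀ (Y : Matrix (Fin n) (Fin r') ℂ) (jc : Fin r'),
    ∃ L : List (Matrix (Fin n) (Fin n) ℂ),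
      (∀ G ∈ L, ∃ s θ φ, k ≤ s ∧ s + 1 < n ∧ G = givens n s θ φ) ∧
      ∀ i : Fin n, k < (i : ℕ) → (L.prod * Y) i jc = 0 := by
  intro d
  induction d with
  | zero =>
    intro k hk Y jc
    exact ⟨[], by simp, fun i hi => absurd i.isLt (by omega)⟩
  | succ d ih =>
    intro k hk Y jc
    obtain ⟨L₁, hL₁, hz⟩ := ih (k + 1) (by omega) Y jc
    have hs : k + 1 < n := by omega
    obtain ⟨θ, φ, hrot⟩ := exists_rot ((L₁.prod * Y) ⟨k, by omega⟩ jc)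
      ((L₁.prod * Y) ⟨k + 1, hs⟩ jc)
    refine ⟨givens n k θ φ :: L₁, ?_, ?_⟩
    · intro G hG
      rcases List.mem_cons.mp hG with rfl | hG
      · exact ⟨k, θ, φ, le_rfl, hs, rfl⟩
      · obtain ⟨s, θ', φ', h1, h2, h3⟩ := hL₁ G hG
        exact ⟨s, θ', φ', by omega, h2, h3⟩
    · intro i hi
      rw [List.prod_cons, Matrix.mul_assoc, givens_mul_apply hs]
      by_cases h1 : (i : ℕ) = k
      · omega
      by_cases h2 : (i : ℕ) = k + 1
      · rw [if_neg h1, if_pos h2]; exact hrot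
      · rw [if_neg h1, if_neg h2]; exact hz i (by omega)

/-- Euler–Hurwitz angles as trivialization of `St(n,r)`: for every Stiefel
matrix `X ∈ St(n,r)` there is a finite product `U` of Givens rotation matrices and phases
`ϕ 0, …, ϕ (r-1)` such that `(U * X) i j = δ_{ij} e^{i ϕ_j}`; equivalently `X = Uᴴ * D(ϕ)`
with `D(ϕ)_{ij} = δ_{ij} e^{i ϕ_i}`, so every Stiefel matrix is in the image of the
Euler–Hurwitz parametrization. -/
theorem euler_hurwitz_trivialization
    (n r : ℕ) (hn : 2 ≤ n) (hr1 : 1 ≤ r) (hrn : r ≤ n)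
    (X : Matrix (Fin n) (Fin r) ℂ) (hX : Xᴴ * X = 1) :
    ∃ L : List (Matrix (Fin n) (Fin n) ℂ),
      (∀ G ∈ L, ∃ (s : ℕ) (θ φ : ℝ), s + 1 < n ∧ G = givens n s θ φ) ∧
      ∃ ϕ : Fin r → ℝ,
        (∀ (i : Fin n) (j : Fin r),
          (L.prod * X) i j =
            if (i : ℕ) = (j : ℕ) then Complex.exp (ϕ j * Complex.I) else 0) ∧
        X = L.prodᴴ *
          Matrix.of (fun (i : Fin n) (j : Fin r) =>
            if (i : ℕ) = (j : ℕ) then Complex.exp (ϕ j * Complex.I) else 0) := by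
  have main : ∀ k, k ≤ r → ∃ L : List (Matrix (Fin n) (Fin n) ℂ),
      (∀ G ∈ L, ∃ (s : ℕ) (θ φ : ℝ), s + 1 < n ∧ G = givens n s θ φ) ∧
      ∃ ϕ : Fin r → ℝ, ∀ (i : Fin n) (j : Fin r), (j : ℕ) < k →
        (L.prod * X) i j = if (i : ℕ) = (j : ℕ) then Complex.exp (ϕ j * Complex.I) else 0 := by
    intro k
    induction k with
    | zero => exact fun _ => ⟨[], by simp, 0, fun i j hj => absurd hj (by omega)⟩
    | succ k ihk =>
      intro hk1
      obtain ⟨L, hLval, ϕ, hϕ⟩ := ihk (by omega)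
      have hkr : k < r := hk1
      have hkn : k < n := by omega
      set Y := L.prod * X with hY
      have hLu : L.prodᴴ * L.prod = 1 := prod_unitary L (fun G hG => by
        obtain ⟨s, θ, φ, hs, rfl⟩ := hLval G hG
        exact givens_unitary hs θ φ)
      have hYo : Yᴴ * Y = 1 := by
        rw [hY, Matrix.conjTranspose_mul, Matrix.mul_assoc, ← Matrix.mul_assoc (L.prod)ᴴ, hLu,
          Matrix.one_mul, hX]
      have hcolup : ∀ i : Fin n, (i : ℕ) < k → Y i ⟨k, hkr⟩ = 0 := by
        intro i hi
        have hir : (i : ℕ) < r := by omega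
        have h0 : (Yᴴ * Y) ⟨(i : ℕ), hir⟩ ⟨k, hkr⟩ = 0 := by
          rw [hYo]
          exact Matrix.one_apply_ne (by simp only [ne_eq, Fin.ext_iff]; omega)
        rw [Matrix.mul_apply] at h0
        simp only [Matrix.conjTranspose_apply] at h0
        rw [Finset.sum_eq_single i] at h0
        · have hYi : Y i ⟨(i : ℕ), hir⟩ = Complex.exp (ϕ ⟨(i : ℕ), hir⟩ * Complex.I) := by
            rw [hϕ i ⟨(i : ℕ), hir⟩ hi, if_pos rfl]
          rw [hYi] at h0
          have hne : star (Complex.exp (ϕ ⟨(i : ℕ), hir⟩ * Complex.I)) ≠ 0 :=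
            star_ne_zero.mpr (Complex.exp_ne_zero _)
          exact (mul_eq_zero.mp h0).resolve_left hne
        · intro t _ ht
          have : Y t ⟨(i : ℕ), hir⟩ = 0 := by
            rw [hϕ t ⟨(i : ℕ), hir⟩ hi, if_neg (by simp only [ne_eq, Fin.ext_iff] at ht ⊢; omega)]
          rw [this, star_zero, zero_mul]
        · intro hmem; exact absurd (Finset.mem_univ _) hmem
      obtain ⟨L₂, hL₂val, hL₂z⟩ := zero_below (n - k - 1) k (by omega) Y ⟨k, hkr⟩
      set Z := L₂.prod * Y with hZ
      have fix := prod_fix L₂ hL₂val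
      have hZcol : ∀ (i : Fin n) (j : Fin r), (j : ℕ) < k →
          Z i j = if (i : ℕ) = (j : ℕ) then Complex.exp (ϕ j * Complex.I) else 0 := by
        intro i j hj
        have hjn : (j : ℕ) < n := by omega
        rw [hZ, Matrix.mul_apply, Finset.sum_eq_single (⟨(j : ℕ), hjn⟩ : Fin n)]
        · rw [hϕ ⟨(j : ℕ), hjn⟩ j hj, if_pos rfl, fix.2 i ⟨(j : ℕ), hjn⟩ hj]
          by_cases hij : (i : ℕ) = (j : ℕ)
          · rw [if_pos hij, if_pos (Fin.ext hij), one_mul]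
          · rw [if_neg hij, if_neg (fun h => hij (by simpa [Fin.ext_iff] using h)), zero_mul]
        · intro t _ ht
          rw [hϕ t j hj, if_neg (by simp only [ne_eq, Fin.ext_iff] at ht ⊢; omega), mul_zero]
        · intro hmem; exact absurd (Finset.mem_univ _) hmem
      have hZk_up : ∀ i : Fin n, (i : ℕ) < k → Z i ⟨k, hkr⟩ = 0 := by
        intro i hi
        rw [hZ, Matrix.mul_apply, Finset.sum_eq_single i]
        · rw [fix.1 i i hi, if_pos rfl, one_mul]
          exact hcolup i hi
        · intro t _ ht
          rw [fix.1 i t hi, if_neg (Ne.symm ht), zero_mul]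
        · intro hmem; exact absurd (Finset.mem_univ _) hmem
      have hZk_dn : ∀ i : Fin n, k < (i : ℕ) → Z i ⟨k, hkr⟩ = 0 := hL₂z
      have hL₂u : L₂.prodᴴ * L₂.prod = 1 := prod_unitary L₂ (fun G hG => by
        obtain ⟨s, θ, φ, _, hs, rfl⟩ := hL₂val G hG
        exact givens_unitary hs θ φ)
      have hZo : Zᴴ * Z = 1 := by
        rw [hZ, Matrix.conjTranspose_mul, Matrix.mul_assoc, ← Matrix.mul_assoc (L₂.prod)ᴴ, hL₂u,
          Matrix.one_mul, hYo]
      set z := Z ⟨k, hkn⟩ ⟨k, hkr⟩ with hz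
      have hnorm : star z * z = 1 := by
        have h1 : (Zᴴ * Z) ⟨k, hkr⟩ ⟨k, hkr⟩ = 1 := by rw [hZo, Matrix.one_apply_eq]
        rw [Matrix.mul_apply] at h1
        simp only [Matrix.conjTranspose_apply] at h1
        rw [Finset.sum_eq_single (⟨k, hkn⟩ : Fin n)] at h1
        · exact h1
        · intro t _ ht
          have htk : (t : ℕ) ≠ k := by simp only [ne_eq, Fin.ext_iff] at ht; exact ht
          rcases Nat.lt_or_ge (t : ℕ) k with h | h
          · rw [hZk_up t h, star_zero, zero_mul]
          · rw [hZk_dn t (by omega), star_zero, zero_mul]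
        · intro hmem; exact absurd (Finset.mem_univ _) hmem
      have habs : ‖z‖ = 1 := by
        have hsq : Complex.normSq z = 1 := by
          have := hnorm
          rw [Complex.star_def, Complex.normSq_eq_conj_mul_self.symm] at this
          exact_mod_cast this
        rw [Complex.norm_def, hsq, Real.sqrt_one]
      have hzval : z = Complex.exp ((Complex.arg z : ℝ) * Complex.I) := by
        have := Complex.norm_mul_exp_arg_mul_I z
        rw [habs] at this
        simpa using this.symm
      refine ⟨L₂ ++ L, ?_, Function.update ϕ ⟨k, hkr⟩ (Complex.arg z), ?_⟩
      · intro G hG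
        rcases List.mem_append.mp hG with hG | hG
        · obtain ⟨s, θ, φ, _, hs, h3⟩ := hL₂val G hG
          exact ⟨s, θ, φ, hs, h3⟩
        · exact hLval G hG
      · intro i j hj
        have hprod : (L₂ ++ L).prod * X = Z := by
          rw [List.prod_append, Matrix.mul_assoc, ← hY, ← hZ]
        rw [hprod]
        rcases Nat.lt_or_ge (j : ℕ) k with hjk | hjk
        · have hjne : j ≠ ⟨k, hkr⟩ := by simp only [ne_eq, Fin.ext_iff]; omega
          rw [Function.update_of_ne hjne]
          exact hZcol i j hjk
        · have hjk' : (j : ℕ) = k := by omega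
          have hjeq : j = ⟨k, hkr⟩ := Fin.ext hjk'
          subst hjeq
          rw [Function.update_self]
          rcases Nat.lt_trichotomy (i : ℕ) k with h | h | h
          · rw [hZk_up i h, if_neg (by omega)]
          · have : i = ⟨k, hkn⟩ := Fin.ext h
            subst this
            rw [if_pos h]
            exact hzval
          · rw [hZk_dn i h, if_neg (by omega)]
  obtain ⟨L, hLval, ϕ, hϕ⟩ := main r le_rfl
  have hLu : L.prodᴴ * L.prod = 1 := prod_unitary L (fun G hG => by
    obtain ⟨s, θ, φ, hs, rfl⟩ := hLval G hG
    exact givens_unitary hs θ φ)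
  refine ⟨L, hLval, ϕ, fun i j => hϕ i j j.isLt, ?_⟩
  have hD : L.prod * X = Matrix.of (fun (i : Fin n) (j : Fin r) =>
      if (i : ℕ) = (j : ℕ) then Complex.exp (ϕ j * Complex.I) else 0) := by
    ext i j
    exact hϕ i j j.isLt
  rw [← hD, ← Matrix.mul_assoc, hLu, Matrix.one_mul]
end
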